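/- Consider q-pebbling (with vector q = (q_1,...,q_d), each q_i ≥ 2) on the d-dimensional grid [n_1] × ... × [n_d], where a move in coordinate i removes q_i pebbles from a vertex and places one on a vertex differing by ±1 in coordinate i. If a configuration D satisfies sum_w D(w)/wq(w,v) > (max_i q_i - 1) * prod_i (q_i+1)/(q_i-1), where wq(w,v) = prod_i q_i^{|w_i - v_i|}, then D is v-solvable. -/

import Mathlib

/-- The pebbling distance `wq(w,v) = ∏ i q_i^{|w_i - v_i|}` on the grid. -/
def wq {d : ℕ} {n : Fin d → ℕ} (q : Fin d → ℕ) (w v : ∀ i, Fin (n i)) : ℝ :=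
  ∏ i, (q i : ℝ) ^ (((w i : ℤ) - (v i : ℤ)).natAbs)

/-- A vector `q`-pebbling move on the grid `[n_1] × ⋯ × [n_d]`: in some coordinate `i`,
remove `q i` pebbles from a vertex `u` and place one pebble on a vertex `u'` adjacent
to `u` in coordinate `i`. -/
def GridStep {d : ℕ} (n q : Fin d → ℕ) (D D' : (∀ i, Fin (n i)) → ℕ) : Prop :=
  ∃ (i : Fin d) (u u' : ∀ i, Fin (n i)), (∀ j, j ≠ i → u j = u' j) ∧
    ((u i : ℤ) - (u' i : ℤ)).natAbs = 1 ∧ q i ≤ D u ∧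
    D' = fun w => if w = u then D u - q i else if w = u' then D u' + 1 else D w

/-- `v`-solvability for vector `q`-pebbling on the grid. -/
def GridSolvable {d : ℕ} (n q : Fin d → ℕ) (D : (∀ i, Fin (n i)) → ℕ)
    (v : ∀ i, Fin (n i)) : Prop :=
  ∃ D', Relation.ReflTransGen (GridStep n q) D D' ∧ 1 ≤ D' v

lemma wq_pos {d : ℕ} {n : Fin d → ℕ} {q : Fin d → ℕ} (hq : ∀ i, 2 ≤ q i)
    (w v : ∀ i, Fin (n i)) : 0 < wq q w v := by
  apply Finset.prod_pos
  intro i _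
  have : (0:ℝ) < q i := by have := hq i; positivity
  positivity


lemma oneDim_bound {m : ℕ} (v : Fin m) {r : ℝ} (hr0 : 0 < r) (hr1 : r < 1) :
    ∑ x : Fin m, r ^ (((x : ℤ) - (v : ℤ)).natAbs) ≤ (1 + r) / (1 - r) := by
  have h1r : (0 : ℝ) < 1 - r := by linarith
  have hG : ∀ N : ℕ, ∑ k ∈ Finset.range N, r ^ k ≤ 1 / (1 - r) := by
    intro N
    rw [geom_sum_eq hr1.ne]
    rw [show r - 1 = -(1 - r) by ring, show r ^ N - 1 = -(1 - r ^ N) by ring,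
      neg_div_neg_eq, div_le_div_iff₀ h1r h1r]
    nlinarith [pow_nonneg hr0.le N]
  classical
  rw [← Finset.sum_filter_add_sum_filter_not Finset.univ (fun x : Fin m => x.val ≤ v.val)]
  have hA : ∑ x ∈ Finset.univ.filter (fun x : Fin m => x.val ≤ v.val),
      r ^ (((x : ℤ) - (v : ℤ)).natAbs) ≤ 1 / (1 - r) := by
    calc ∑ x ∈ Finset.univ.filter (fun x : Fin m => x.val ≤ v.val),
        r ^ (((x : ℤ) - (v : ℤ)).natAbs)
        = ∑ k ∈ (Finset.univ.filter (fun x : Fin m => x.val ≤ v.val)).image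
            (fun x : Fin m => v.val - x.val), r ^ k := by
          rw [Finset.sum_image]
          · apply Finset.sum_congr rfl
            intro x hx
            simp only [Finset.mem_filter] at hx
            congr 1
            omega
          · intro x hx y hy hxy
            simp only [Finset.mem_coe, Finset.mem_filter] at hx hy hxy
            exact Fin.ext (by omega)
      _ ≤ ∑ k ∈ Finset.range m, r ^ k := by
          apply Finset.sum_le_sum_of_subset_of_nonneg
          · intro k hk
            simp only [Finset.mem_image, Finset.mem_filter] at hk
            obtain ⟨x, _, hx⟩ := hk
            simp only [Finset.mem_range]
            omega
          · intro k _ _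
            positivity
      _ ≤ 1 / (1 - r) := hG m
  have hB : ∑ x ∈ Finset.univ.filter (fun x : Fin m => ¬ x.val ≤ v.val),
      r ^ (((x : ℤ) - (v : ℤ)).natAbs) ≤ r / (1 - r) := by
    calc ∑ x ∈ Finset.univ.filter (fun x : Fin m => ¬ x.val ≤ v.val),
        r ^ (((x : ℤ) - (v : ℤ)).natAbs)
        = ∑ k ∈ (Finset.univ.filter (fun x : Fin m => ¬ x.val ≤ v.val)).image
            (fun x : Fin m => x.val - v.val), r ^ k := by
          rw [Finset.sum_image]
          · apply Finset.sum_congr rfl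
            intro x hx
            simp only [Finset.mem_filter] at hx
            congr 1
            omega
          · intro x hx y hy hxy
            simp only [Finset.mem_coe, Finset.mem_filter] at hx hy hxy
            exact Fin.ext (by omega)
      _ ≤ ∑ k ∈ Finset.Ico 1 m, r ^ k := by
          apply Finset.sum_le_sum_of_subset_of_nonneg
          · intro k hk
            simp only [Finset.mem_image, Finset.mem_filter] at hk
            obtain ⟨x, hx1, hx⟩ := hk
            simp only [Finset.mem_Ico]
            omega
          · intro k _ _
            positivity
      _ = ∑ k ∈ Finset.range (m - 1), r ^ (1 + k) := by
          rw [Finset.sum_Ico_eq_sum_range]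
      _ = r * ∑ k ∈ Finset.range (m - 1), r ^ k := by
          rw [Finset.mul_sum]
          exact Finset.sum_congr rfl fun k _ => by rw [pow_add, pow_one]
      _ ≤ r * (1 / (1 - r)) := by
          exact mul_le_mul_of_nonneg_left (hG _) hr0.le
      _ = r / (1 - r) := by ring
  calc _ ≤ 1 / (1 - r) + r / (1 - r) := add_le_add hA hB
    _ = (1 + r) / (1 - r) := by ring

lemma sum_inv_wq {d : ℕ} {n : Fin d → ℕ} {q : Fin d → ℕ} (hq : ∀ i, 2 ≤ q i)
    (v : ∀ i, Fin (n i)) :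
    ∑ w : ∀ i, Fin (n i), (wq q w v)⁻¹ ≤ ∏ i, ((q i : ℝ) + 1) / ((q i : ℝ) - 1) := by
  have key : ∀ w : ∀ i, Fin (n i), (wq q w v)⁻¹
      = ∏ i, ((q i : ℝ)⁻¹) ^ (((w i : ℤ) - (v i : ℤ)).natAbs) := by
    intro w
    rw [wq, ← Finset.prod_inv_distrib]
    exact Finset.prod_congr rfl fun i _ => (inv_pow _ _).symm
  simp only [key]
  rw [← Fintype.prod_sum (fun i (x : Fin (n i)) => ((q i : ℝ)⁻¹) ^ (((x : ℤ) - (v i : ℤ)).natAbs))]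
  apply Finset.prod_le_prod
  · intro i _
    apply Finset.sum_nonneg
    intro x _
    positivity
  · intro i _
    have hq2 : (2:ℝ) ≤ q i := by exact_mod_cast hq i
    have hr0 : (0:ℝ) < (q i : ℝ)⁻¹ := by positivity
    have hr1 : (q i : ℝ)⁻¹ < 1 := by
      rw [inv_lt_one_iff₀]; right; linarith
    calc ∑ x : Fin (n i), ((q i : ℝ)⁻¹) ^ (((x : ℤ) - (v i : ℤ)).natAbs)
        ≤ (1 + (q i : ℝ)⁻¹) / (1 - (q i : ℝ)⁻¹) := oneDim_bound (v i) hr0 hr1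
      _ = ((q i : ℝ) + 1) / ((q i : ℝ) - 1) := by
          rw [div_eq_div_iff (by linarith) (by linarith)]
          field_simp


/-- the sufficient condition for solvability on grids. -/
theorem stmt4 {d : ℕ} (hd : 0 < d) (n q : Fin d → ℕ) (hq : ∀ i, 2 ≤ q i)
    (hn : ∀ i, 1 ≤ n i) (D : (∀ i, Fin (n i)) → ℕ) (v : ∀ i, Fin (n i))
    (h : ((Finset.univ.sup q : ℕ) - 1 : ℝ) * ∏ i, ((q i : ℝ) + 1) / ((q i : ℝ) - 1)
          < ∑ w, (D w : ℝ) / wq q w v) :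
    GridSolvable n q D v := by
  classical
  set M : ℕ := Finset.univ.sup q with hM
  have hM2 : 2 ≤ M := le_trans (hq ⟨0, hd⟩) (Finset.le_sup (Finset.mem_univ _))
  -- strong induction on total number of pebbles
  suffices H : ∀ (N : ℕ) (D : (∀ i, Fin (n i)) → ℕ), ∑ w, D w = N →
      ((M : ℕ) - 1 : ℝ) * ∏ i, ((q i : ℝ) + 1) / ((q i : ℝ) - 1) < ∑ w, (D w : ℝ) / wq q w v →
      GridSolvable n q D v from H _ D rfl h
  intro N
  induction N using Nat.strong_induction_on with
  | _ N ih =>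
  intro D hN h
  by_cases hDv : 1 ≤ D v
  · exact ⟨D, Relation.ReflTransGen.refl, hDv⟩
  have hDv0 : D v = 0 := by omega
  by_cases hex : ∃ (u : ∀ i, Fin (n i)) (i : Fin d), u i ≠ v i ∧ q i ≤ D u
  · obtain ⟨u, i, hui, hqu⟩ := hex
    -- build the target vertex u', one step closer to v in coordinate i
    have hvi : (v i).val < n i := (v i).isLt
    have hne : (u i).val ≠ (v i).val := fun e => hui (Fin.ext e)
    set c : Fin (n i) := if hlt : (u i).val < (v i).val
      then ⟨(u i).val + 1, by omega⟩ else ⟨(u i).val - 1, by omega⟩ with hc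
    have hc1 : (((u i : ℤ)) - (c : ℤ)).natAbs = 1 := by
      rw [hc]; split <;> simp <;> omega
    have hc2 : (((u i : ℤ)) - ((v i) : ℤ)).natAbs
        = (((c : ℤ)) - ((v i) : ℤ)).natAbs + 1 := by
      rw [hc]; split <;> simp <;> omega
    set u' : ∀ j, Fin (n j) := Function.update u i c with hu'
    have hu'i : u' i = c := Function.update_self i c u
    have hu'j : ∀ j, j ≠ i → u j = u' j := fun j hj =>
      (Function.update_of_ne hj c u).symm
    have huu' : u ≠ u' := by
      intro e
      have : u i = c := by rw [e, hu'i]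
      rw [this] at hc1
      simp at hc1
    set D' : (∀ i, Fin (n i)) → ℕ :=
      fun w => if w = u then D u - q i else if w = u' then D u' + 1 else D w with hD'
    have hstep : GridStep n q D D' := ⟨i, u, u', hu'j, by rw [hu'i]; exact hc1, hqu, rfl⟩
    -- weight relation
    have hwq : wq q u v = (q i : ℝ) * wq q u' v := by
      rw [wq, wq, Fintype.prod_eq_mul_prod_compl i, Fintype.prod_eq_mul_prod_compl i,
        hu'i]
      have hrest : ∏ j ∈ {i}ᶜ, (q j : ℝ) ^ (((u j : ℤ) - (v j : ℤ)).natAbs)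
          = ∏ j ∈ {i}ᶜ, (q j : ℝ) ^ (((u' j : ℤ) - (v j : ℤ)).natAbs) := by
        apply Finset.prod_congr rfl
        intro j hj
        rw [hu'j j (by simpa using hj)]
      rw [← hrest, hc2, pow_succ]
      ring
    have hwpos := wq_pos hq u v
    have hwpos' := wq_pos hq u' v
    have hqiR : (2:ℝ) ≤ q i := by exact_mod_cast hq i
    -- potential preserved
    have hpot : ∑ w, (D' w : ℝ) / wq q w v = ∑ w, (D w : ℝ) / wq q w v := by
      have hzero : ∀ w ∈ Finset.univ, w ∉ ({u, u'} : Finset _) →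
          (D' w : ℝ) / wq q w v - (D w : ℝ) / wq q w v = 0 := by
        intro w _ hw
        simp only [Finset.mem_insert, Finset.mem_singleton, not_or] at hw
        simp [hD', hw.1, hw.2]
      have : ∑ w, ((D' w : ℝ) / wq q w v - (D w : ℝ) / wq q w v) = 0 := by
        rw [← Finset.sum_subset (Finset.subset_univ ({u, u'} : Finset _)) hzero,
          Finset.sum_pair huu']
        have e1 : D' u = D u - q i := by simp [hD']
        have e2 : D' u' = D u' + 1 := by simp [hD', huu'.symm]
        rw [e1, e2, Nat.cast_sub hqu, hwq]
        push_cast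
        field_simp
        ring
      have := Finset.sum_sub_distrib (f := fun w => (D' w : ℝ) / wq q w v)
        (g := fun w => (D w : ℝ) / wq q w v) ▸ this
      linarith [this]
    -- pebble count decreases
    have hcount : ∑ w, D' w < N := by
      have hsplit : ∀ (E : (∀ i, Fin (n i)) → ℕ),
          ∑ w, E w = ∑ w ∈ ({u, u'} : Finset _)ᶜ, E w + (E u + E u') := by
        intro E
        rw [← Finset.sum_compl_add_sum ({u, u'} : Finset _) E, Finset.sum_pair huu']
      have hsame : ∑ w ∈ ({u, u'} : Finset _)ᶜ, D' w = ∑ w ∈ ({u, u'} : Finset _)ᶜ, D w := by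
        apply Finset.sum_congr rfl
        intro w hw
        simp only [Finset.mem_compl, Finset.mem_insert, Finset.mem_singleton, not_or] at hw
        simp [hD', hw.1, hw.2]
      have e1 : D' u = D u - q i := by simp [hD']
      have e2 : D' u' = D u' + 1 := by simp [hD', huu'.symm]
      have h1 := hsplit D'
      have h2 := hsplit D
      have hqi := hq i
      omega
    obtain ⟨D'', htrans, hD''⟩ := ih _ hcount D' rfl (by rw [hpot]; exact h)
    exact ⟨D'', Relation.ReflTransGen.head hstep htrans, hD''⟩
  · -- no move available: contradiction with the potential bound
    exfalso
    push_neg at hex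
    have hbound : ∀ w, (D w : ℝ) ≤ (M : ℝ) - 1 := by
      intro w
      by_cases hwv : w = v
      · subst hwv
        rw [hDv0]
        have : (2:ℝ) ≤ M := by exact_mod_cast hM2
        push_cast
        linarith
      · obtain ⟨i, hi⟩ : ∃ i, w i ≠ v i := by
          by_contra hc
          push_neg at hc
          exact hwv (funext hc)
        have h1 : D w < q i := hex w i hi
        have h2 : q i ≤ M := Finset.le_sup (Finset.mem_univ i)
        have : (D w : ℝ) + 1 ≤ (M : ℝ) := by exact_mod_cast Nat.succ_le_of_lt (lt_of_lt_of_le h1 h2)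
        linarith
    have hle : ∑ w, (D w : ℝ) / wq q w v
        ≤ ((M : ℕ) - 1 : ℝ) * ∏ i, ((q i : ℝ) + 1) / ((q i : ℝ) - 1) := by
      calc ∑ w, (D w : ℝ) / wq q w v ≤ ∑ w : ∀ i, Fin (n i), ((M:ℝ) - 1) * (wq q w v)⁻¹ := by
            apply Finset.sum_le_sum
            intro w _
            rw [div_eq_mul_inv]
            exact mul_le_mul_of_nonneg_right (hbound w) (inv_nonneg.mpr (wq_pos hq w v).le)
        _ = ((M:ℝ) - 1) * ∑ w : ∀ i, Fin (n i), (wq q w v)⁻¹ := by rw [Finset.mul_sum]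
        _ ≤ ((M:ℝ) - 1) * ∏ i, ((q i : ℝ) + 1) / ((q i : ℝ) - 1) := by
            apply mul_le_mul_of_nonneg_left (sum_inv_wq hq v)
            have : (2:ℝ) ≤ M := by exact_mod_cast hM2
            linarith
    linarith
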